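/- The map x \mapsto H_\infty x^{m-1} is a bounded positively (m-1)-homogeneous operator from l^1 to l^p for every 1 < p < \infty: for all x in l^1 and t > 0, H_\infty (tx)^{m-1} = t^{m-1} H_\infty x^{m-1}, and \|H_\infty x^{m-1}\|_p \leq (\sum_{i \geq 1} i^{-p})^{1/p} \|x\|_1^{m-1}. -/

import Mathlib

/-- The `i`-th component of `H_∞ x^{m-1}` (indices 0-based, so the denominator
`i + i_2 + ... + i_m - m + 1` becomes `(i + ∑ k, j k) + 1`). -/
noncomputable def hilbertComp (m : ℕ) (x : ℕ → ℝ) (i : ℕ) : ℝ :=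
  ∑' j : Fin (m - 1) → ℕ, (∏ k, x (j k)) / (((i + ∑ k, j k) + 1 : ℕ) : ℝ)

lemma aux_prod_summable (f : ℕ → ℝ) (hf : Summable f) (hf0 : ∀ n, 0 ≤ f n) :
    ∀ n : ℕ, Summable (fun j : Fin n → ℕ => ∏ k, f (j k)) ∧
      (∑' j : Fin n → ℕ, ∏ k, f (j k)) = (∑' i, f i) ^ n := by
  intro n
  induction n with
  | zero =>
      constructor
      · exact Summable.of_finite
      · simp [tsum_fintype]
  | succ n ih =>
      obtain ⟨ihs, iht⟩ := ih
      let e : (ℕ × (Fin n → ℕ)) ≃ (Fin (n + 1) → ℕ) :=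
        Fin.consEquiv (fun _ => ℕ)
      have hprod : ∀ p : ℕ × (Fin n → ℕ),
          (∏ k : Fin (n + 1), f ((e p) k))
            = f p.1 * ∏ k : Fin n, f (p.2 k) := by
        intro p
        show (∏ k : Fin (n + 1), f ((Fin.cons p.1 p.2 : Fin (n+1) → ℕ) k)) = _
        rw [Fin.prod_univ_succ, Fin.cons_zero]
        exact congrArg _ (Finset.prod_congr rfl fun k _ => by rw [Fin.cons_succ])
      have hsp : Summable (fun p : ℕ × (Fin n → ℕ) => f p.1 * ∏ k, f (p.2 k)) := by
        have h1 : Summable (fun n => ‖f n‖) := by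
          simpa [Real.norm_eq_abs, abs_of_nonneg (hf0 _)] using hf
        have h2 : Summable (fun j : Fin n → ℕ => ‖∏ k, f (j k)‖) := by
          have : ∀ j : Fin n → ℕ, ‖∏ k, f (j k)‖ = ∏ k, f (j k) := by
            intro j
            rw [Real.norm_eq_abs, abs_of_nonneg (Finset.prod_nonneg fun k _ => hf0 _)]
          simpa [this] using ihs
        simpa using (h1.mul_norm (g := fun j : Fin n → ℕ => ∏ k, f (j k)) h2).of_norm
      have hcomp : Summable (fun p : ℕ × (Fin n → ℕ) =>
          ∏ k : Fin (n + 1), f ((e p) k)) := hsp.congr fun p => (hprod p).symm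
      constructor
      · exact (e.summable_iff (f := fun j : Fin (n + 1) → ℕ => ∏ k, f (j k))).1 hcomp
      · rw [← e.tsum_eq]
        have h1 : (∑' p : ℕ × (Fin n → ℕ), ∏ k : Fin (n + 1), f ((e p) k))
            = ∑' p : ℕ × (Fin n → ℕ), f p.1 * ∏ k, f (p.2 k) := tsum_congr hprod
        rw [h1, Summable.tsum_prod hsp, pow_succ]
        have h2 : (∑' (b : ℕ) (c : Fin n → ℕ), f b * ∏ k, f (c k))
            = ∑' b : ℕ, f b * (∑' i, f i) ^ n :=
          tsum_congr fun b => by rw [tsum_mul_left, iht]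
        rw [h2, tsum_mul_right]
        ring

set_option maxHeartbeats 1000000 in
theorem hilbertComp_homogeneous_bounded (m : ℕ) (hm : 2 ≤ m) (x : ℕ → ℝ)
    (hx : Summable fun i => |x i|) :
    (∀ t : ℝ, 0 < t → ∀ i : ℕ,
      hilbertComp m (fun k => t * x k) i = t ^ (m - 1) * hilbertComp m x i) ∧
    (∀ p : ℝ, 1 < p →
      Summable (fun i : ℕ => |hilbertComp m x i| ^ p) ∧
      (∑' i : ℕ, |hilbertComp m x i| ^ p) ^ (1 / p)
        ≤ (∑' i : ℕ, ((i : ℝ) + 1) ^ (-p)) ^ (1 / p) * (∑' k, |x k|) ^ (m - 1)) := by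
  set S : ℝ := ∑' k, |x k| with hS
  have hS0 : 0 ≤ S := tsum_nonneg fun k => abs_nonneg _
  obtain ⟨habs_sum, habs_tsum⟩ :=
    aux_prod_summable (fun k => |x k|) hx (fun k => abs_nonneg _) (m - 1)
  -- summability of the defining series, with absolute values
  have hden : ∀ (i : ℕ) (j : Fin (m - 1) → ℕ),
      (i : ℝ) + 1 ≤ (((i + ∑ k, j k) + 1 : ℕ) : ℝ) := by
    intro i j
    push_cast
    have : (0 : ℝ) ≤ ∑ k : Fin (m - 1), ((j k : ℕ) : ℝ) :=
      Finset.sum_nonneg fun k _ => by positivity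
    linarith
  have hden_pos : ∀ (i : ℕ) (j : Fin (m - 1) → ℕ),
      (0 : ℝ) < (((i + ∑ k, j k) + 1 : ℕ) : ℝ) := by
    intro i j
    exact_mod_cast Nat.succ_pos _
  have habs_le : ∀ (i : ℕ) (j : Fin (m - 1) → ℕ),
      |(∏ k, x (j k)) / (((i + ∑ k, j k) + 1 : ℕ) : ℝ)|
        ≤ (∏ k, |x (j k)|) / ((i : ℝ) + 1) := by
    intro i j
    rw [abs_div, Finset.abs_prod, abs_of_pos (hden_pos i j)]
    exact div_le_div_of_nonneg_left (Finset.prod_nonneg fun k _ => abs_nonneg _)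
      (by positivity) (hden i j)
  have habs_summ : ∀ i : ℕ, Summable (fun j : Fin (m - 1) → ℕ =>
      |(∏ k, x (j k)) / (((i + ∑ k, j k) + 1 : ℕ) : ℝ)|) := by
    intro i
    refine Summable.of_nonneg_of_le (fun j => abs_nonneg _) (habs_le i) ?_
    exact habs_sum.div_const _
  have hsumm : ∀ i : ℕ, Summable (fun j : Fin (m - 1) → ℕ =>
      (∏ k, x (j k)) / (((i + ∑ k, j k) + 1 : ℕ) : ℝ)) :=
    fun i => (habs_summ i).of_abs
  -- key pointwise bound
  have hbound : ∀ i : ℕ, |hilbertComp m x i| ≤ S ^ (m - 1) / ((i : ℝ) + 1) := by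
    intro i
    have h1 : |hilbertComp m x i|
        ≤ ∑' j : Fin (m - 1) → ℕ,
            |(∏ k, x (j k)) / (((i + ∑ k, j k) + 1 : ℕ) : ℝ)| := by
      have hn : Summable (fun j : Fin (m - 1) → ℕ =>
          ‖(∏ k, x (j k)) / (((i + ∑ k, j k) + 1 : ℕ) : ℝ)‖) := by
        simpa only [Real.norm_eq_abs] using habs_summ i
      simpa only [Real.norm_eq_abs, hilbertComp] using norm_tsum_le_tsum_norm hn
    refine h1.trans ?_
    have h2 : (∑' j : Fin (m - 1) → ℕ,
        |(∏ k, x (j k)) / (((i + ∑ k, j k) + 1 : ℕ) : ℝ)|)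
        ≤ ∑' j : Fin (m - 1) → ℕ, (∏ k, |x (j k)|) / ((i : ℝ) + 1) :=
      Summable.tsum_le_tsum (habs_le i) (habs_summ i) (habs_sum.div_const _)
    refine h2.trans ?_
    rw [tsum_div_const, habs_tsum]
  constructor
  · -- homogeneity
    intro t ht i
    unfold hilbertComp
    have : ∀ j : Fin (m - 1) → ℕ,
        (∏ k, t * x (j k)) / (((i + ∑ k, j k) + 1 : ℕ) : ℝ)
          = t ^ (m - 1) * ((∏ k, x (j k)) / (((i + ∑ k, j k) + 1 : ℕ) : ℝ)) := by
      intro j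
      rw [Finset.prod_mul_distrib, Finset.prod_const]
      simp [mul_div_assoc]
    simp_rw [this]
    exact tsum_mul_left
  · intro p hp
    have hp0 : 0 < p := lt_trans one_pos hp
    -- summability of (i+1)^(-p)
    have hT : Summable (fun i : ℕ => ((i : ℝ) + 1) ^ (-p)) := by
      have h1 : Summable (fun i : ℕ => 1 / (i : ℝ) ^ p) :=
        Real.summable_one_div_nat_rpow.2 hp
      have h2 : Summable (fun i : ℕ => 1 / ((i + 1 : ℕ) : ℝ) ^ p) :=
        (summable_nat_add_iff 1).2 h1
      refine h2.congr fun i => ?_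
      rw [Real.rpow_neg (by positivity), one_div]
      push_cast
      ring_nf
    have hT0 : 0 ≤ ∑' i : ℕ, ((i : ℝ) + 1) ^ (-p) :=
      tsum_nonneg fun i => Real.rpow_nonneg (by positivity) _
    set C : ℝ := (S ^ (m - 1)) ^ p with hC
    have hC0 : 0 ≤ C := Real.rpow_nonneg (by positivity) _
    have hptle : ∀ i : ℕ, |hilbertComp m x i| ^ p ≤ C * ((i : ℝ) + 1) ^ (-p) := by
      intro i
      have h1 : |hilbertComp m x i| ^ p ≤ (S ^ (m - 1) / ((i : ℝ) + 1)) ^ p :=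
        Real.rpow_le_rpow (abs_nonneg _) (hbound i) (le_of_lt hp0)
      refine h1.trans_eq ?_
      rw [Real.div_rpow (by positivity) (by positivity), div_eq_mul_inv,
        ← Real.rpow_neg (by positivity)]
    have hsummp : Summable (fun i : ℕ => |hilbertComp m x i| ^ p) := by
      refine Summable.of_nonneg_of_le
        (fun i => Real.rpow_nonneg (abs_nonneg _) _) hptle (hT.mul_left C)
    refine ⟨hsummp, ?_⟩
    have h2 : (∑' i : ℕ, |hilbertComp m x i| ^ p)
        ≤ C * ∑' i : ℕ, ((i : ℝ) + 1) ^ (-p) := by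
      rw [← tsum_mul_left]
      exact Summable.tsum_le_tsum hptle hsummp (hT.mul_left C)
    have h3 : (∑' i : ℕ, |hilbertComp m x i| ^ p) ^ (1 / p)
        ≤ (C * ∑' i : ℕ, ((i : ℝ) + 1) ^ (-p)) ^ (1 / p) :=
      Real.rpow_le_rpow (tsum_nonneg fun i => Real.rpow_nonneg (abs_nonneg _) _)
        h2 (by positivity)
    refine h3.trans_eq ?_
    rw [Real.mul_rpow hC0 hT0, hC, ← Real.rpow_natCast S (m - 1),
      ← Real.rpow_mul hS0, ← Real.rpow_mul hS0, mul_one_div, mul_div_assoc,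
      div_self (ne_of_gt hp0), mul_one]
    exact mul_comm _ _
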